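/- Let d ≥ 1, let φ_1,…,φ_d be pairwise distinct real numbers, let p_1,…,p_d > 0 with ∑_i p_i = 1, and let q > 0. Then the d×d matrix M with entries M_{ij} = q p_j for i ≠ j and M_{ii} = q p_i − q + φ_i has exactly d distinct real eigenvalues: writing the values φ_i − q in increasing order as c_1 < … < c_d, there is exactly one eigenvalue in each open interval (c_i, c_{i+1}) for i = 1,…,d−1, exactly one eigenvalue in (c_d, ∞), and no other eigenvalues (in particular none in (−∞, c_1] and none equal to any c_i). -/

import Mathlib

open Finset Set Matrix

noncomputable def fAux {d : ℕ} (q : ℝ) (w c : Fin d → ℝ) (θ : ℝ) : ℝ :=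
  (∏ i, (c i - θ)) + q * ∑ j, w j * ∏ i ∈ Finset.univ.erase j, (c i - θ)

lemma prodNeg {ι : Type*} (s : Finset ι) (g : ι → ℝ) :
    (∏ i ∈ s, -g i) = (-1) ^ s.card * ∏ i ∈ s, g i := by
  rw [show (∏ i ∈ s, -g i) = ∏ i ∈ s, ((-1) * g i) from prod_congr rfl fun i _ => by ring,
    prod_mul_distrib, prod_const]

lemma detEq {d : ℕ} (q : ℝ) (w c : Fin d → ℝ) (θ : ℝ) (hθ : ∀ i, c i ≠ θ) :
    (Matrix.diagonal (fun i => c i - θ) + replicateCol Unit (fun _ => q) * replicateRow Unit w).det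
      = fAux q w c θ := by
  have hvne : ∀ i, c i - θ ≠ 0 := fun i => sub_ne_zero_of_ne (hθ i)
  have hpe : ∀ i, (∏ j, (c j - θ)) = (c i - θ) * ∏ j ∈ Finset.univ.erase i, (c j - θ) :=
    fun i => (Finset.mul_prod_erase Finset.univ (fun j => c j - θ) (Finset.mem_univ i)).symm
  have hdet : (Matrix.diagonal (fun i => c i - θ)).det = ∏ i, (c i - θ) := det_diagonal
  have hunit : IsUnit (Matrix.diagonal (fun i => c i - θ)).det := by
    rw [hdet]
    exact (prod_ne_zero_iff.mpr fun i _ => hvne i).isUnit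
  rw [det_add_replicateCol_mul_replicateRow hunit, hdet, det_unique, Matrix.add_apply, one_apply_eq]
  have hent : ((replicateRow Unit w * (Matrix.diagonal (fun i => c i - θ))⁻¹ * (replicateCol Unit (fun _ => q) : Matrix (Fin d) Unit ℝ)
      : Matrix Unit Unit ℝ)) default default = ∑ i, w i * (c i - θ)⁻¹ * q := by
    have hinvd : (Matrix.diagonal fun i => c i - θ)⁻¹ = Matrix.diagonal (fun i => (c i - θ)⁻¹) := by
      refine Matrix.inv_eq_right_inv ?_
      rw [diagonal_mul_diagonal]
      rw [show (fun i => (c i - θ) * (c i - θ)⁻¹) = fun _ => (1:ℝ) from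
        funext fun i => mul_inv_cancel₀ (hvne i), diagonal_one]
    rw [hinvd]
    simp [Matrix.mul_apply, Matrix.diagonal, Ring.inverse_eq_inv', mul_ite, ite_mul, zero_mul,
      mul_zero, Finset.sum_ite_eq, Finset.sum_ite_eq', Matrix.replicateRow_apply,
      Matrix.replicateCol_apply]
  rw [hent, fAux, mul_add, mul_one, Finset.mul_sum, Finset.mul_sum]
  congr 1
  refine Finset.sum_congr rfl fun i _ => ?_
  rw [hpe i]
  have h1 : (c i - θ) * (c i - θ)⁻¹ = 1 := mul_inv_cancel₀ (hvne i)
  calc ((c i - θ) * ∏ j ∈ Finset.univ.erase i, (c j - θ)) * (w i * (c i - θ)⁻¹ * q)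
      = ((c i - θ) * (c i - θ)⁻¹) * ((∏ j ∈ Finset.univ.erase i, (c j - θ)) * w i * q) := by
        ring
    _ = q * (w i * ∏ j ∈ Finset.univ.erase i, (c j - θ)) := by rw [h1]; ring

lemma fAux_continuous {d : ℕ} (q : ℝ) (w c : Fin d → ℝ) : Continuous (fAux q w c) := by
  unfold fAux
  refine Continuous.add (continuous_finset_prod _ fun i _ => by fun_prop) ?_
  exact Continuous.mul continuous_const <| continuous_finset_sum _ fun j _ =>
    Continuous.mul continuous_const (continuous_finset_prod _ fun i _ => by fun_prop)

lemma detEq' {d : ℕ} (q : ℝ) (w c : Fin d → ℝ) (θ : ℝ) :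
    (Matrix.diagonal (fun i => c i - θ) + replicateCol Unit (fun _ => q) * replicateRow Unit w).det
      = fAux q w c θ := by
  have hdense : Dense (Set.range c)ᶜ := ((Set.finite_range c).countable).dense_compl ℝ
  have hcont1 : Continuous fun θ : ℝ =>
      (Matrix.diagonal (fun i => c i - θ) + replicateCol Unit (fun _ => q) * replicateRow Unit w).det := by
    refine Continuous.matrix_det (continuous_matrix fun i j => ?_)
    by_cases h : i = j <;>
      simp [Matrix.add_apply, Matrix.mul_apply, Matrix.diagonal, h, Matrix.replicateCol, Matrix.row] <;>
      fun_prop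
  have heq : ∀ θ ∈ (Set.range c)ᶜ,
      (Matrix.diagonal (fun i => c i - θ) + replicateCol Unit (fun _ => q) * replicateRow Unit w).det
        = fAux q w c θ := by
    intro θ hθ
    exact detEq q w c θ fun i h => hθ ⟨i, h⟩
  exact congrFun (Continuous.ext_on hdense hcont1 (fAux_continuous q w c) heq) θ

noncomputable def pAux {d : ℕ} (q : ℝ) (w c : Fin d → ℝ) : Polynomial ℝ :=
  (∏ i, (Polynomial.C (c i) - Polynomial.X)) +
    Polynomial.C q * ∑ j, Polynomial.C (w j) *
      ∏ i ∈ Finset.univ.erase j, (Polynomial.C (c i) - Polynomial.X)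

lemma pAux_eval {d : ℕ} (q : ℝ) (w c : Fin d → ℝ) (θ : ℝ) :
    (pAux q w c).eval θ = fAux q w c θ := by
  simp [pAux, fAux, Polynomial.eval_prod, Polynomial.eval_finset_sum]

lemma natDegree_CX (a : ℝ) : (Polynomial.C a - Polynomial.X).natDegree = 1 := by
  rw [show Polynomial.C a - Polynomial.X = -(Polynomial.X - Polynomial.C a) from by ring,
    Polynomial.natDegree_neg, Polynomial.natDegree_X_sub_C]

lemma CX_ne_zero (a : ℝ) : Polynomial.C a - Polynomial.X ≠ 0 := fun h => by
  simpa [h] using natDegree_CX a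

lemma leadingCoeff_CX (a : ℝ) : (Polynomial.C a - Polynomial.X).leadingCoeff = -1 := by
  rw [show Polynomial.C a - Polynomial.X = -(Polynomial.X - Polynomial.C a) from by ring,
    Polynomial.leadingCoeff_neg, Polynomial.leadingCoeff_X_sub_C]

lemma pAux_prod_natDegree {d : ℕ} (c : Fin d → ℝ) :
    (∏ i, (Polynomial.C (c i) - Polynomial.X)).natDegree = d := by
  rw [Polynomial.natDegree_prod _ _ fun i _ => CX_ne_zero (c i)]
  simp [natDegree_CX]

lemma pAux_natDegree_le {d : ℕ} (q : ℝ) (w c : Fin d → ℝ) :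
    (pAux q w c).natDegree ≤ d := by
  refine le_trans (Polynomial.natDegree_add_le _ _) (max_le (le_of_eq (pAux_prod_natDegree c)) ?_)
  refine le_trans (Polynomial.natDegree_C_mul_le _ _) ?_
  refine Polynomial.natDegree_sum_le_of_forall_le _ _ fun j _ => ?_
  refine le_trans (Polynomial.natDegree_C_mul_le _ _) ?_
  refine le_trans (Polynomial.natDegree_prod_le _ _) ?_
  calc (∑ i ∈ Finset.univ.erase j, (Polynomial.C (c i) - Polynomial.X).natDegree)
      = (Finset.univ.erase j).card := by simp [natDegree_CX]
    _ ≤ d := by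
        rw [Finset.card_erase_of_mem (Finset.mem_univ j)]
        simp [Finset.card_univ]

lemma pAux_coeff_d {d : ℕ} (hd : 1 ≤ d) (q : ℝ) (w c : Fin d → ℝ) :
    (pAux q w c).coeff d = (-1) ^ d := by
  have hA : (∏ i, (Polynomial.C (c i) - Polynomial.X)).coeff d = (-1) ^ d := by
    have h1 : (∏ i, (Polynomial.C (c i) - Polynomial.X)).coeff d
        = (∏ i, (Polynomial.C (c i) - Polynomial.X)).leadingCoeff := by
      rw [Polynomial.leadingCoeff, pAux_prod_natDegree]
    rw [h1, Polynomial.leadingCoeff_prod]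
    simp [leadingCoeff_CX]
  have hB : (Polynomial.C q * ∑ j, Polynomial.C (w j) *
      ∏ i ∈ Finset.univ.erase j, (Polynomial.C (c i) - Polynomial.X)).coeff d = 0 := by
    refine Polynomial.coeff_eq_zero_of_natDegree_lt ?_
    refine lt_of_le_of_lt (le_trans (Polynomial.natDegree_C_mul_le _ _)
      (Polynomial.natDegree_sum_le_of_forall_le _ _ fun j _ => ?_)) (show d - 1 < d by omega)
    refine le_trans (Polynomial.natDegree_C_mul_le _ _) ?_
    refine le_trans (Polynomial.natDegree_prod_le _ _) ?_
    calc (∑ i ∈ Finset.univ.erase j, (Polynomial.C (c i) - Polynomial.X).natDegree)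
        = (Finset.univ.erase j).card := by simp [natDegree_CX]
      _ ≤ d - 1 := by
          rw [Finset.card_erase_of_mem (Finset.mem_univ j)]
          simp [Finset.card_univ]
  rw [pAux, Polynomial.coeff_add, hA, hB, add_zero]

lemma pAux_ne_zero {d : ℕ} (hd : 1 ≤ d) (q : ℝ) (w c : Fin d → ℝ) : pAux q w c ≠ 0 := by
  intro h
  have := pAux_coeff_d hd q w c
  rw [h] at this
  have h2 : ((-1:ℝ)) ^ d ≠ 0 := pow_ne_zero _ (by norm_num)
  simp at this
  exact h2 this.symm

lemma erase_eq_Iio_union_Ioi {d : ℕ} (k : Fin d) :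
    Finset.univ.erase k = Finset.Iio k ∪ Finset.Ioi k := by
  ext i
  simp only [Finset.mem_erase, Finset.mem_univ, and_true, Finset.mem_union, Finset.mem_Iio,
    Finset.mem_Ioi]
  exact ne_iff_lt_or_gt

lemma fAux_value_at_c {d : ℕ} (q : ℝ) (w c : Fin d → ℝ) (hc : Function.Injective c) (k : Fin d) :
    fAux q w c (c k) = q * (w k * ∏ i ∈ Finset.univ.erase k, (c i - c k)) := by
  unfold fAux
  rw [Finset.prod_eq_zero (Finset.mem_univ k) (sub_self (c k)), zero_add]
  congr 1
  refine Finset.sum_eq_single k (fun j _ hjk => ?_) (fun h => absurd (Finset.mem_univ k) h)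
  rw [Finset.prod_eq_zero (Finset.mem_erase.mpr ⟨Ne.symm hjk , Finset.mem_univ k⟩) (sub_self (c k)),
    mul_zero]

lemma sign_at_c {d : ℕ} {q : ℝ} {w c : Fin d → ℝ} (hq : 0 < q) (hw : ∀ i, 0 < w i)
    (hc : StrictMono c) (k : Fin d) :
    0 < (-1) ^ (k : ℕ) * fAux q w c (c k) := by
  rw [fAux_value_at_c q w c hc.injective k, erase_eq_Iio_union_Ioi,
    Finset.prod_union (by
      rw [Finset.disjoint_left]
      intro a ha hb
      exact absurd (lt_trans (Finset.mem_Iio.mp ha) (Finset.mem_Ioi.mp hb)) (lt_irrefl _))]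
  have hIoi : 0 < ∏ i ∈ Finset.Ioi k, (c i - c k) :=
    Finset.prod_pos fun i hi => sub_pos.mpr (hc (Finset.mem_Ioi.mp hi))
  have hIio : (∏ i ∈ Finset.Iio k, (c i - c k))
      = (-1) ^ (k : ℕ) * ∏ i ∈ Finset.Iio k, (c k - c i) := by
    rw [show (∏ i ∈ Finset.Iio k, (c i - c k)) = ∏ i ∈ Finset.Iio k, -(c k - c i) from
      Finset.prod_congr rfl fun i _ => by ring, prodNeg, Fin.card_Iio]
  have hIio2 : 0 < ∏ i ∈ Finset.Iio k, (c k - c i) :=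
    Finset.prod_pos fun i hi => sub_pos.mpr (hc (Finset.mem_Iio.mp hi))
  rw [hIio]
  have hsq : ((-1:ℝ)) ^ (k:ℕ) * ((-1:ℝ)) ^ (k:ℕ) = 1 := by
    rw [← pow_add]
    exact Even.neg_one_pow ⟨k, rfl⟩
  have hgoal : (-1:ℝ) ^ (k:ℕ) * (q * (w k * ((-1) ^ (k:ℕ) *
      (∏ i ∈ Finset.Iio k, (c k - c i)) * ∏ i ∈ Finset.Ioi k, (c i - c k))))
      = ((-1:ℝ) ^ (k:ℕ) * (-1:ℝ) ^ (k:ℕ)) * (q * w k *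
        (∏ i ∈ Finset.Iio k, (c k - c i)) * ∏ i ∈ Finset.Ioi k, (c i - c k)) := by ring
  rw [hgoal, hsq, one_mul]
  exact mul_pos (mul_pos (mul_pos hq (hw k)) hIio2) hIoi

lemma sign_at_R {d : ℕ} (hd : 1 ≤ d) {q R : ℝ} {w c : Fin d → ℝ} (hq : 0 < q)
    (hw : ∀ i, 0 < w i) (hsum : ∑ i, w i = 1) (hR : ∀ i, c i + q < R) :
    0 < (-1) ^ d * fAux q w c R := by
  obtain ⟨m, rfl⟩ : ∃ m, d = m + 1 := ⟨d - 1, by omega⟩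
  have hRc : ∀ i, c i < R := fun i => lt_trans (by linarith [hq]) (hR i)
  have hBpos : ∀ j : Fin (m+1), 0 < ∏ i ∈ Finset.univ.erase j, (R - c i) :=
    fun j => Finset.prod_pos fun i _ => sub_pos.mpr (hRc i)
  have e1 : (∏ i, (c i - R)) = (-1) ^ (m+1) * ∏ i, (R - c i) := by
    rw [show (∏ i : Fin (m+1), (c i - R)) = ∏ i : Fin (m+1), -(R - c i) from
      Finset.prod_congr rfl fun i _ => by ring, prodNeg]
    simp [Finset.card_univ]
  have e2 : ∀ j : Fin (m+1), (∏ i ∈ Finset.univ.erase j, (c i - R))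
      = (-1) ^ m * ∏ i ∈ Finset.univ.erase j, (R - c i) := by
    intro j
    rw [show (∏ i ∈ Finset.univ.erase j, (c i - R)) = ∏ i ∈ Finset.univ.erase j, -(R - c i) from
      Finset.prod_congr rfl fun i _ => by ring, prodNeg, Finset.card_erase_of_mem
      (Finset.mem_univ j)]
    simp [Finset.card_univ]
  have hsq : ((-1:ℝ)) ^ m * ((-1:ℝ)) ^ m = 1 := by
    rw [← pow_add]; exact Even.neg_one_pow ⟨m, rfl⟩
  have e3 : fAux q w c R = (-1) ^ (m+1) * ((∏ i, (R - c i))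
      - q * ∑ j, w j * ∏ i ∈ Finset.univ.erase j, (R - c i)) := by
    unfold fAux
    rw [e1]
    rw [show (∑ j, w j * ∏ i ∈ Finset.univ.erase j, (c i - R))
        = ∑ j, w j * ((-1) ^ m * ∏ i ∈ Finset.univ.erase j, (R - c i)) from
      Finset.sum_congr rfl fun j _ => by rw [e2 j]]
    rw [show (∑ j, w j * ((-1:ℝ) ^ m * ∏ i ∈ Finset.univ.erase j, (R - c i)))
        = (-1) ^ m * ∑ j, w j * ∏ i ∈ Finset.univ.erase j, (R - c i) from by
      rw [Finset.mul_sum]; exact Finset.sum_congr rfl fun j _ => by ring]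
    rw [pow_succ]
    ring
  rw [e3, show ((-1:ℝ))^(m+1) * ((-1:ℝ)^(m+1) * ((∏ i, (R - c i))
      - q * ∑ j, w j * ∏ i ∈ Finset.univ.erase j, (R - c i)))
      = (((-1:ℝ))^m * ((-1:ℝ))^m) * ((∏ i, (R - c i))
      - q * ∑ j, w j * ∏ i ∈ Finset.univ.erase j, (R - c i)) from by rw [pow_succ]; ring,
    hsq, one_mul]
  have e4 : (∏ i, (R - c i)) = ∑ j, w j * ((R - c j) * ∏ i ∈ Finset.univ.erase j, (R - c i)) := by
    rw [show (∑ j, w j * ((R - c j) * ∏ i ∈ Finset.univ.erase j, (R - c i)))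
        = ∑ j, w j * ∏ i, (R - c i) from Finset.sum_congr rfl fun j _ => by
          rw [Finset.mul_prod_erase Finset.univ (fun i => R - c i) (Finset.mem_univ j)],
      ← Finset.sum_mul, hsum, one_mul]
  rw [e4, Finset.mul_sum, ← Finset.sum_sub_distrib]
  refine Finset.sum_pos (fun j _ => ?_) Finset.univ_nonempty
  have : w j * ((R - c j) * ∏ i ∈ Finset.univ.erase j, (R - c i))
      - q * (w j * ∏ i ∈ Finset.univ.erase j, (R - c i))
      = w j * (R - c j - q) * ∏ i ∈ Finset.univ.erase j, (R - c i) := by ring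
  rw [this]
  exact mul_pos (mul_pos (hw j) (by linarith [hR j])) (hBpos j)

lemma ivt_root {f : ℝ → ℝ} (hf : Continuous f) {a b : ℝ} (hab : a < b)
    (h : f a * f b < 0) : ∃ x, x ∈ Set.Ioo a b ∧ f x = 0 := by
  rcases mul_neg_iff.mp h with ⟨ha, hb⟩ | ⟨ha, hb⟩
  · obtain ⟨x, hx, hfx⟩ := intermediate_value_Ioo' hab.le hf.continuousOn
      (show (0:ℝ) ∈ Set.Ioo (f b) (f a) from ⟨hb, ha⟩)
    exact ⟨x, hx, hfx⟩
  · obtain ⟨x, hx, hfx⟩ := intermediate_value_Ioo hab.le hf.continuousOn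
      (show (0:ℝ) ∈ Set.Ioo (f a) (f b) from ⟨ha, hb⟩)
    exact ⟨x, hx, hfx⟩

/-- The matrix `M = q e pᵀ − q I + diag(φ₁,…,φ_d)` (pairwise distinct `φ i`,
`p i > 0` summing to one, `q > 0`) has exactly `d` distinct real eigenvalues:
writing the values `φ i − q` in increasing order as `c₁ < … < c_d` (via a
permutation `e`), there is exactly one eigenvalue in each interval
`(c i, c (i+1))`, exactly one in `(c_d, ∞)`, and every eigenvalue lies strictly
above `c₁` and differs from every `c i`. -/
theorem real_eigenvalues_interlace
    (d : ℕ) (hd : 1 ≤ d) (q : ℝ) (hq : 0 < q) (φ p : Fin d → ℝ)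
    (hφ : Function.Injective φ) (hp : ∀ i, 0 < p i) (hsum : ∑ i, p i = 1)
    (e : Equiv.Perm (Fin d)) (hmono : StrictMono fun i => φ (e i) - q) :
    (∀ i : Fin d, ∀ h : i.val + 1 < d,
      ∃! θ : ℝ, θ ∈ Set.Ioo (φ (e i) - q) (φ (e ⟨i.val + 1, h⟩) - q) ∧
        Matrix.det
          ((Matrix.of fun i j : Fin d => if i = j then q * p i - q + φ i else q * p j)
            - θ • (1 : Matrix (Fin d) (Fin d) ℝ)) = 0) ∧
    (∃! θ : ℝ, θ ∈ Set.Ioi (φ (e ⟨d - 1, by omega⟩) - q) ∧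
        Matrix.det
          ((Matrix.of fun i j : Fin d => if i = j then q * p i - q + φ i else q * p j)
            - θ • (1 : Matrix (Fin d) (Fin d) ℝ)) = 0) ∧
    (∀ θ : ℝ,
        Matrix.det
          ((Matrix.of fun i j : Fin d => if i = j then q * p i - q + φ i else q * p j)
            - θ • (1 : Matrix (Fin d) (Fin d) ℝ)) = 0 →
        φ (e ⟨0, by omega⟩) - q < θ ∧ ∀ i, θ ≠ φ i - q) := by
  classical
  set c : Fin d → ℝ := fun i => φ (e i) - q with hcdef
  set w : Fin d → ℝ := fun i => p (e i) with hwdef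
  have hw : ∀ i, 0 < w i := fun i => hp _
  have hsumw : ∑ i, w i = 1 := by rw [hwdef]; rw [Equiv.sum_comp e p]; exact hsum
  have hmc : StrictMono c := hmono
  set g : ℝ → ℝ := fAux q w c with hgdef
  have hgc : Continuous g := fAux_continuous q w c
  -- determinant identity
  have hdet : ∀ θ : ℝ,
      Matrix.det ((Matrix.of fun i j : Fin d => if i = j then q * p i - q + φ i else q * p j)
        - θ • (1 : Matrix (Fin d) (Fin d) ℝ)) = g θ := by
    intro θ
    rw [← Matrix.det_submatrix_equiv_self e]
    have hM : ((Matrix.of fun i j : Fin d => if i = j then q * p i - q + φ i else q * p j)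
          - θ • (1 : Matrix (Fin d) (Fin d) ℝ)).submatrix e e
        = Matrix.diagonal (fun i => c i - θ) + replicateCol Unit (fun _ => q) * replicateRow Unit w := by
      ext i j
      by_cases h : i = j
      · subst h
        simp [Matrix.submatrix_apply, Matrix.sub_apply, Matrix.smul_apply, Matrix.one_apply,
          Matrix.diagonal, Matrix.add_apply, Matrix.mul_apply, Matrix.replicateCol, Matrix.replicateRow, hcdef, hwdef]
        ring
      · have h2 : e i ≠ e j := fun hh => h (e.injective hh)
        simp [Matrix.submatrix_apply, Matrix.sub_apply, Matrix.smul_apply, Matrix.one_apply,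
          Matrix.diagonal, h, h2, Matrix.add_apply, Matrix.mul_apply, Matrix.replicateCol, Matrix.replicateRow, hwdef]
    rw [hM, detEq']
  -- the top pole and the point R
  set kl : Fin d := ⟨d - 1, by omega⟩ with hkl
  set R : ℝ := c kl + q + 1 with hR
  have hcle : ∀ i : Fin d, c i ≤ c kl := by
    intro i
    refine hmc.monotone ?_
    rw [Fin.le_def]
    simp only [hkl]
    omega
  have hRbig : ∀ i, c i + q < R := fun i => by
    have := hcle i
    rw [hR]; linarith
  -- interval right endpoints
  set b : Fin d → ℝ := fun k => if h : (k : ℕ) + 1 < d then c ⟨(k : ℕ) + 1, h⟩ else R with hbdef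
  have hcb : ∀ k, c k < b k := by
    intro k
    show c k < if h : (k : ℕ) + 1 < d then c ⟨(k : ℕ) + 1, h⟩ else R
    by_cases h : (k : ℕ) + 1 < d
    · rw [dif_pos h]
      exact hmc (by rw [Fin.lt_def]; simp)
    · rw [dif_neg h]
      have := hcle k
      rw [hR]; linarith
  have hsign_c : ∀ k : Fin d, 0 < (-1) ^ (k : ℕ) * g (c k) := fun k => sign_at_c hq hw hmc k
  have hsign_b : ∀ k : Fin d, 0 < (-1) ^ ((k : ℕ) + 1) * g (b k) := by
    intro k
    show 0 < (-1) ^ ((k : ℕ) + 1) * g (if h : (k : ℕ) + 1 < d then c ⟨(k : ℕ) + 1, h⟩ else R)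
    by_cases h : (k : ℕ) + 1 < d
    · rw [dif_pos h]
      have := sign_at_c (w := w) (c := c) hq hw hmc ⟨(k : ℕ) + 1, h⟩
      simpa using this
    · rw [dif_neg h]
      have hkd : (k : ℕ) + 1 = d := by omega
      rw [hkd]
      exact sign_at_R hd hq hw hsumw hRbig
  -- roots by IVT
  have hroot : ∀ k : Fin d, ∃ θ, θ ∈ Set.Ioo (c k) (b k) ∧ g θ = 0 := by
    intro k
    refine ivt_root hgc (hcb k) ?_
    have h3 : ((-1 : ℝ)) ^ (k : ℕ) * ((-1 : ℝ)) ^ ((k : ℕ) + 1) = -1 := by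
      rw [← pow_add]
      exact Odd.neg_one_pow ⟨(k : ℕ), by omega⟩
    have h4 := mul_pos (hsign_c k) (hsign_b k)
    have h5 : ((-1 : ℝ) ^ (k : ℕ) * g (c k)) * ((-1 : ℝ) ^ ((k : ℕ) + 1) * g (b k))
        = -(g (c k) * g (b k)) := by
      linear_combination (g (c k) * g (b k)) * h3
    rw [h5] at h4
    linarith
  choose r hrmem hrzero using hroot
  -- interval ordering
  have hble : ∀ k m : Fin d, k < m → b k ≤ c m := by
    intro k m hkm
    rw [Fin.lt_def] at hkm
    show (if h : (k : ℕ) + 1 < d then c ⟨(k : ℕ) + 1, h⟩ else R) ≤ c m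
    by_cases h : (k : ℕ) + 1 < d
    · rw [dif_pos h]
      refine hmc.monotone ?_
      rw [Fin.le_def]
      simpa using by omega
    · exfalso
      have := m.isLt
      omega
  have hrlt : ∀ k m : Fin d, k < m → r k < r m := fun k m h =>
    lt_trans (lt_of_lt_of_le (hrmem k).2 (hble k m h)) (hrmem m).1
  have hrinj : Function.Injective r := by
    intro a b' hab
    rcases lt_trichotomy a b' with h | h | h
    · exact absurd hab (ne_of_lt (hrlt _ _ h))
    · exact h
    · exact absurd hab.symm (ne_of_lt (hrlt _ _ h))
  -- counting roots
  have hPne : pAux q w c ≠ 0 := pAux_ne_zero hd q w c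
  have hcard : (pAux q w c).roots.toFinset.card ≤ d :=
    le_trans (Multiset.toFinset_card_le _)
      (le_trans (Polynomial.card_roots' _) (pAux_natDegree_le q w c))
  have hTcard : (Finset.image r Finset.univ).card = d := by
    rw [Finset.card_image_of_injective _ hrinj, Finset.card_univ, Fintype.card_fin]
  have hsub : Finset.image r Finset.univ ⊆ (pAux q w c).roots.toFinset := by
    intro θ hθ
    rcases Finset.mem_image.mp hθ with ⟨k, -, rfl⟩
    rw [Multiset.mem_toFinset, Polynomial.mem_roots hPne]
    show (pAux q w c).eval (r k) = 0
    rw [pAux_eval]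
    exact hrzero k
  have hT : Finset.image r Finset.univ = (pAux q w c).roots.toFinset :=
    Finset.eq_of_subset_of_card_le hsub (by rw [hTcard]; exact hcard)
  have hall : ∀ θ, g θ = 0 → ∃ k, r k = θ := by
    intro θ h0
    have hmem : θ ∈ (pAux q w c).roots.toFinset := by
      rw [Multiset.mem_toFinset, Polynomial.mem_roots hPne]
      show (pAux q w c).eval θ = 0
      rw [pAux_eval]
      exact h0
    rw [← hT] at hmem
    rcases Finset.mem_image.mp hmem with ⟨k, -, hk⟩
    exact ⟨k, hk⟩
  have hloc : ∀ k m : Fin d, r m ∈ Set.Ioo (c k) (b k) → m = k := by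
    intro k m hm
    by_contra hne
    rcases lt_or_gt_of_ne hne with h | h
    · exact absurd (lt_trans (lt_of_lt_of_le (hrmem m).2 (hble m k h)) hm.1) (lt_irrefl _)
    · exact absurd (lt_trans (lt_of_lt_of_le hm.2 (hble k m h)) (hrmem m).1) (lt_irrefl _)
  refine ⟨?_, ?_, ?_⟩
  · -- one root in each bounded interval
    intro i h
    have hbi : b i = c ⟨(i : ℕ) + 1, h⟩ := by
      show (if h' : (i : ℕ) + 1 < d then c ⟨(i : ℕ) + 1, h'⟩ else R) = c ⟨(i : ℕ) + 1, h⟩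
      exact dif_pos h
    have hmemi : r i ∈ Set.Ioo (φ (e i) - q) (φ (e ⟨(i : ℕ) + 1, h⟩) - q) := by
      have := hrmem i
      rw [hbi] at this
      exact this
    refine ⟨r i, ⟨hmemi, by rw [hdet]; exact hrzero i⟩, ?_⟩
    rintro θ ⟨hθmem, hθdet⟩
    rw [hdet] at hθdet
    obtain ⟨m, rfl⟩ := hall θ hθdet
    have : m = i := hloc i m (by rw [hbi]; exact hθmem)
    rw [this]
  · -- one root above the top pole
    have hmeml : r kl ∈ Set.Ioi (φ (e kl) - q) := (hrmem kl).1
    refine ⟨r kl, ⟨hmeml, by rw [hdet]; exact hrzero kl⟩, ?_⟩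
    rintro θ ⟨hθmem, hθdet⟩
    rw [hdet] at hθdet
    obtain ⟨m, rfl⟩ := hall θ hθdet
    have hmle : m ≤ kl := by
      rw [Fin.le_def]
      simp only [hkl]
      have := m.isLt
      omega
    rcases lt_or_eq_of_le hmle with h | h
    · exfalso
      have h1 : r m < c kl := lt_of_lt_of_le (hrmem m).2 (hble m kl h)
      exact absurd (lt_trans h1 hθmem) (lt_irrefl _)
    · rw [h]
  · -- all roots above the lowest pole and distinct from poles
    intro θ hθdet
    rw [hdet] at hθdet
    obtain ⟨m, rfl⟩ := hall θ hθdet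
    constructor
    · have h0m : c ⟨0, by omega⟩ ≤ c m := hmc.monotone (by rw [Fin.le_def]; simp)
      exact lt_of_le_of_lt h0m (hrmem m).1
    · intro i heq
      have hieq : φ i - q = c (e.symm i) := by rw [hcdef]; simp
      have hz : g (c (e.symm i)) = 0 := by
        rw [← hieq, ← heq]
        exact hrzero m
      have := hsign_c (e.symm i)
      rw [hz, mul_zero] at this
      exact lt_irrefl _ this
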